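/- For monotone functions f, g, h on a complete lattice, if g∘f ≤ f∘h (pointwise), then g*∘f ≤ f∘h*, where k* denotes the least closure above a monotone function k. -/
import Mathlib


def IsClosure {L : Type*} [CompleteLattice L] (c : L → L) : Prop :=
  Monotone c ∧ (∀ x, x ≤ c x) ∧ (∀ x, c (c x) ≤ c x)

/-- `c` is the least closure above `k`. -/
def IsLeastClosureAbove {L : Type*} [CompleteLattice L] (k c : L → L) : Prop :=
  IsClosure c ∧ (∀ x, k x ≤ c x) ∧
    ∀ d, IsClosure d → (∀ x, k x ≤ d x) → ∀ x, c x ≤ d x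

/-- If g∘f ≤ f∘h pointwise, then g*∘f ≤ f∘h*. -/
theorem stmt1 {L : Type*} [CompleteLattice L] (f g h gs hs : L → L)
    (hf : Monotone f) (hg : Monotone g) (hh : Monotone h)
    (hgs : IsLeastClosureAbove g gs) (hhs : IsLeastClosureAbove h hs)
    (hyp : ∀ x, g (f x) ≤ f (h x)) :
    ∀ x, gs (f x) ≤ f (hs x) := by
  classical
  intro x
  obtain ⟨⟨hsMono, hsLe, hsIdem⟩, hhle, _⟩ := hhs
  obtain ⟨_, _, gsMin⟩ := hgs
  set z := f (hs x) with hz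
  have hgz : g z ≤ z := by
    calc g z ≤ f (h (hs x)) := hyp (hs x)
    _ ≤ f (hs (hs x)) := hf (hhle (hs x))
    _ ≤ z := hf (hsIdem x)
  set d : L → L := fun w => if w ≤ z then z else ⊤ with hd
  have hdc : IsClosure d := by
    refine ⟨?_, ?_, ?_⟩
    · intro a b hab
      by_cases hb : b ≤ z
      · simp [hd, hb, hab.trans hb]
      · simp [hd, hb]
    · intro w
      by_cases hw : w ≤ z <;> simp [hd, hw]
    · intro w
      by_cases hw : w ≤ z <;> simp [hd, hw]
  have hgd : ∀ w, g w ≤ d w := by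
    intro w
    by_cases hw : w ≤ z
    · simpa [hd, hw] using (hg hw).trans hgz
    · simp [hd, hw]
  have := gsMin d hdc hgd (f x)
  have hfx : f x ≤ z := hf (hsLe x)
  simpa [hd, hfx] using this
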